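/- Well-formedness is preserved by reduction: if the configuration C is well-formed and C ⟶ C', then C' is well-formed. -/

import Mathlib

/- A formalization of the Calculus of Collision-prone Communicating Processes (CCCP). -/

namespace CCCP

/-- Channels are represented by natural numbers. -/
abbrev Chan : Type := ℕ

/-- A channel environment maps each channel to an exposure time and a value. -/
abbrev ChanEnv (V : Type) : Type := Chan → ℕ × V

/-- Expressions: values and (de Bruijn) data variables. -/
inductive Exp (V : Type) : Type where
  | val (v : V)
  | var (i : ℕ)

/-- Boolean expressions: equality tests and exposure checks. -/
inductive BExp (V : Type) : Type where
  | beq (e1 e2 : Exp V)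
  | exposed (c : Chan)

/-- Station code (processes).  Data variables and process (recursion) variables
are in de Bruijn style: `rcv c P Q` binds data variable 0 in `P`, and `fix P`
binds process variable 0 in `P`. -/
inductive Proc (V : Type) : Type where
  | broadcast (c : Chan) (e : Exp V) (P : Proc V)  -- c!⟨e⟩.P
  | rcv (c : Chan) (P Q : Proc V)                  -- ⌊c?(x).P⌋Q
  | sigma (P : Proc V)                             -- σ.P
  | tau (P : Proc V)                               -- τ.P
  | sum (P Q : Proc V)                             -- P + Q
  | mtch (b : BExp V) (P Q : Proc V)               -- [b]P,Q
  | pvar (X : ℕ)                                   -- process variable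
  | nil                                            -- termination
  | fix (P : Proc V)                               -- recursion

/-- System terms.  `active c P` is an active receiver c(x).P which binds data
variable 0 in `P`; `res c n v W` is the channel restriction νc:(n,v).W. -/
inductive Sys (V : Type) : Type where
  | proc (P : Proc V)
  | active (c : Chan) (P : Proc V)
  | par (W1 W2 : Sys V)
  | res (c : Chan) (n : ℕ) (v : V) (W : Sys V)

variable {V : Type}

/-- Evaluation of closed expressions. -/
def Exp.eval : Exp V → Option V
  | .val v => some v
  | .var _ => none

def Exp.liftD : Exp V → ℕ → Exp V
  | .val v, _ => .val v
  | .var i, k => if i < k then .var i else .var (i + 1)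

def Exp.substD : Exp V → ℕ → V → Exp V
  | .val w, _, _ => .val w
  | .var i, j, v => if i = j then .val v else if j < i then .var (i - 1) else .var i

def BExp.liftD : BExp V → ℕ → BExp V
  | .beq e1 e2, k => .beq (e1.liftD k) (e2.liftD k)
  | .exposed c, _ => .exposed c

def BExp.substD : BExp V → ℕ → V → BExp V
  | .beq e1 e2, j, v => .beq (e1.substD j v) (e2.substD j v)
  | .exposed c, _, _ => .exposed c

/-- Lifting of data variables (≥ k) in a process. -/
def Proc.liftD : Proc V → ℕ → Proc V
  | .broadcast c e P, k => .broadcast c (e.liftD k) (Proc.liftD P k)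
  | .rcv c P Q, k => .rcv c (Proc.liftD P (k + 1)) (Proc.liftD Q k)
  | .sigma P, k => .sigma (Proc.liftD P k)
  | .tau P, k => .tau (Proc.liftD P k)
  | .sum P Q, k => .sum (Proc.liftD P k) (Proc.liftD Q k)
  | .mtch b P Q, k => .mtch (b.liftD k) (Proc.liftD P k) (Proc.liftD Q k)
  | .pvar X, _ => .pvar X
  | .nil, _ => .nil
  | .fix P, k => .fix (Proc.liftD P k)

/-- Substitution of a (closed) value for data variable j in a process. -/
def Proc.substD : Proc V → ℕ → V → Proc V
  | .broadcast c e P, j, v => .broadcast c (e.substD j v) (Proc.substD P j v)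
  | .rcv c P Q, j, v => .rcv c (Proc.substD P (j + 1) v) (Proc.substD Q j v)
  | .sigma P, j, v => .sigma (Proc.substD P j v)
  | .tau P, j, v => .tau (Proc.substD P j v)
  | .sum P Q, j, v => .sum (Proc.substD P j v) (Proc.substD Q j v)
  | .mtch b P Q, j, v => .mtch (b.substD j v) (Proc.substD P j v) (Proc.substD Q j v)
  | .pvar X, _, _ => .pvar X
  | .nil, _, _ => .nil
  | .fix P, j, v => .fix (Proc.substD P j v)

/-- Lifting of process variables (≥ k) in a process. -/
def Proc.liftP : Proc V → ℕ → Proc V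
  | .broadcast c e P, k => .broadcast c e (Proc.liftP P k)
  | .rcv c P Q, k => .rcv c (Proc.liftP P k) (Proc.liftP Q k)
  | .sigma P, k => .sigma (Proc.liftP P k)
  | .tau P, k => .tau (Proc.liftP P k)
  | .sum P Q, k => .sum (Proc.liftP P k) (Proc.liftP Q k)
  | .mtch b P Q, k => .mtch b (Proc.liftP P k) (Proc.liftP Q k)
  | .pvar X, k => if X < k then .pvar X else .pvar (X + 1)
  | .nil, _ => .nil
  | .fix P, k => .fix (Proc.liftP P (k + 1))

/-- Substitution of a process S for process variable j (used for unfolding fix). -/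
def Proc.substP : Proc V → ℕ → Proc V → Proc V
  | .broadcast c e P, j, S => .broadcast c e (Proc.substP P j S)
  | .rcv c P Q, j, S => .rcv c (Proc.substP P j (Proc.liftD S 0)) (Proc.substP Q j S)
  | .sigma P, j, S => .sigma (Proc.substP P j S)
  | .tau P, j, S => .tau (Proc.substP P j S)
  | .sum P Q, j, S => .sum (Proc.substP P j S) (Proc.substP Q j S)
  | .mtch b P Q, j, S => .mtch b (Proc.substP P j S) (Proc.substP Q j S)
  | .pvar X, j, S => if X = j then S else if j < X then .pvar (X - 1) else .pvar X
  | .nil, _, _ => .nil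
  | .fix P, j, S => .fix (Proc.substP P (j + 1) (Proc.liftP S 0))

/-- Iterated time-delay prefix σ^n.P -/
def Proc.sigmaIter : ℕ → Proc V → Proc V
  | 0, P => P
  | n + 1, P => .sigma (Proc.sigmaIter n P)

/-- Does the process contain an unguarded receiver listening on channel c? -/
def Proc.hasRcv : Proc V → Chan → Bool
  | .broadcast _ _ _, _ => false
  | .rcv d _ _, c => d == c
  | .sigma _, _ => false
  | .tau _, _ => false
  | .sum P Q, c => Proc.hasRcv P c || Proc.hasRcv Q c
  | .mtch _ _ _, _ => false
  | .pvar _, _ => false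
  | .nil, _ => false
  | .fix P, c => Proc.hasRcv P c

/-- Does the system term contain an unguarded receiver listening on channel c? -/
def Sys.hasRcv : Sys V → Chan → Bool
  | .proc P, c => P.hasRcv c
  | .active _ _, _ => false
  | .par W1 W2, c => Sys.hasRcv W1 c || Sys.hasRcv W2 c
  | .res d _ _ W, c => if d = c then false else Sys.hasRcv W c

/-- The predicate rcv(Γ ▷ W, c): channel c is idle in Γ and W contains an
unguarded receiver actively awaiting a message on c. -/
def Isrcv (Γ : ChanEnv V) (W : Sys V) (c : Chan) : Prop :=
  (Γ c).1 = 0 ∧ W.hasRcv c = true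

/- Closedness of terms: data variables < dk and process variables < pk. -/

def Exp.closedUnder : Exp V → ℕ → Bool
  | .val _, _ => true
  | .var i, dk => decide (i < dk)

def BExp.closedUnder : BExp V → ℕ → Bool
  | .beq e1 e2, dk => e1.closedUnder dk && e2.closedUnder dk
  | .exposed _, _ => true

def Proc.closedUnder : Proc V → ℕ → ℕ → Bool
  | .broadcast _ e P, dk, pk => e.closedUnder dk && Proc.closedUnder P dk pk
  | .rcv _ P Q, dk, pk => Proc.closedUnder P (dk + 1) pk && Proc.closedUnder Q dk pk
  | .sigma P, dk, pk => Proc.closedUnder P dk pk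
  | .tau P, dk, pk => Proc.closedUnder P dk pk
  | .sum P Q, dk, pk => Proc.closedUnder P dk pk && Proc.closedUnder Q dk pk
  | .mtch b P Q, dk, pk => b.closedUnder dk && Proc.closedUnder P dk pk && Proc.closedUnder Q dk pk
  | .pvar X, _, pk => decide (X < pk)
  | .nil, _, _ => true
  | .fix P, dk, pk => Proc.closedUnder P dk (pk + 1)

def Sys.closedUnder : Sys V → ℕ → ℕ → Bool
  | .proc P, dk, pk => P.closedUnder dk pk
  | .active _ P, dk, pk => P.closedUnder (dk + 1) pk
  | .par W1 W2, dk, pk => Sys.closedUnder W1 dk pk && Sys.closedUnder W2 dk pk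
  | .res _ _ _ W, dk, pk => Sys.closedUnder W dk pk

/-- Process variable k does not occur unguarded (i.e. every occurrence of k lies
under a time-consuming construct: broadcast, receiver, σ-prefix or matching). -/
def Proc.guardedVar : Proc V → ℕ → Bool
  | .broadcast _ _ _, _ => true
  | .rcv _ _ _, _ => true
  | .sigma _, _ => true
  | .tau P, k => Proc.guardedVar P k
  | .sum P Q, k => Proc.guardedVar P k && Proc.guardedVar Q k
  | .mtch _ _ _, _ => true
  | .pvar X, k => X != k
  | .nil, _ => true
  | .fix P, k => Proc.guardedVar P (k + 1)

/-- Every recursion fix X.P in the term has its recursion variable guarded by a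
time-consuming construct. -/
def Proc.wfRec : Proc V → Bool
  | .broadcast _ _ P => Proc.wfRec P
  | .rcv _ P Q => Proc.wfRec P && Proc.wfRec Q
  | .sigma P => Proc.wfRec P
  | .tau P => Proc.wfRec P
  | .sum P Q => Proc.wfRec P && Proc.wfRec Q
  | .mtch _ P Q => Proc.wfRec P && Proc.wfRec Q
  | .pvar _ => true
  | .nil => true
  | .fix P => Proc.wfRec P && Proc.guardedVar P 0

def Sys.wfRec : Sys V → Bool
  | .proc P => P.wfRec
  | .active _ P => P.wfRec
  | .par W1 W2 => Sys.wfRec W1 && Sys.wfRec W2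
  | .res _ _ _ W => Sys.wfRec W

/-- A legal system term: closed, and all recursion variables guarded. -/
def Sys.proper (W : Sys V) : Prop :=
  W.closedUnder 0 0 = true ∧ W.wfRec = true

/- Free channel occurrences. -/

def BExp.usesChan : BExp V → Chan → Bool
  | .beq _ _, _ => false
  | .exposed d, c => d == c

def Proc.freeChan : Proc V → Chan → Bool
  | .broadcast d _ P, c => d == c || Proc.freeChan P c
  | .rcv d P Q, c => d == c || Proc.freeChan P c || Proc.freeChan Q c
  | .sigma P, c => Proc.freeChan P c
  | .tau P, c => Proc.freeChan P c
  | .sum P Q, c => Proc.freeChan P c || Proc.freeChan Q c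
  | .mtch b P Q, c => b.usesChan c || Proc.freeChan P c || Proc.freeChan Q c
  | .pvar _, _ => false
  | .nil, _ => false
  | .fix P, c => Proc.freeChan P c

def Sys.freeChan : Sys V → Chan → Bool
  | .proc P, c => P.freeChan c
  | .active d P, c => d == c || P.freeChan c
  | .par W1 W2, c => Sys.freeChan W1 c || Sys.freeChan W2 c
  | .res d _ _ W, c => if d = c then false else Sys.freeChan W c

/-- Labels of the intensional semantics. -/
inductive Label (V : Type) : Type where
  | out (c : Chan) (v : V)    -- c!v
  | inp (c : Chan) (v : V)    -- c?v
  | tau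
  | sigma

def Label.usesChan : Label V → Chan → Prop
  | .out d _, c => d = c
  | .inp d _, c => d = c
  | .tau, _ => False
  | .sigma, _ => False

/-- Updating a channel environment at channel c upon a broadcast (or input) of
value v: this models collisions. -/
def updBcast (errv : V) (δ : V → ℕ) (Γ : ChanEnv V) (c : Chan) (v : V) : ChanEnv V :=
  fun d => if d = c then
      (if (Γ c).1 = 0 then (δ v, v) else (max (δ v) (Γ c).1, errv))
    else Γ d

/-- The channel-environment update upd_λ(Γ). -/
def updL (errv : V) (δ : V → ℕ) : Label V → ChanEnv V → ChanEnv V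
  | .out c v, Γ => updBcast errv δ Γ c v
  | .inp c v, Γ => updBcast errv δ Γ c v
  | .tau, Γ => Γ
  | .sigma, Γ => fun c => ((Γ c).1 - 1, (Γ c).2)

/-- Γ[c ↦ p] -/
def updEnv (Γ : ChanEnv V) (c : Chan) (p : ℕ × V) : ChanEnv V :=
  fun d => if d = c then p else Γ d

/-- Evaluation of (closed) boolean expressions relative to a channel environment. -/
inductive BEval (Γ : ChanEnv V) : BExp V → Bool → Prop where
  | beqT {e1 e2 : Exp V} {v : V} :
      e1.eval = some v → e2.eval = some v → BEval Γ (.beq e1 e2) true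
  | beqF {e1 e2 : Exp V} {v1 v2 : V} :
      e1.eval = some v1 → e2.eval = some v2 → v1 ≠ v2 → BEval Γ (.beq e1 e2) false
  | expT {c : Chan} : 0 < (Γ c).1 → BEval Γ (.exposed c) true
  | expF {c : Chan} : (Γ c).1 = 0 → BEval Γ (.exposed c) false

/-- The intensional semantics of CCCP: Γ ▷ W --λ--> W'.
Parameters: `errv` is the error value, `δ` gives the transmission time of values. -/
inductive Step (errv : V) (δ : V → ℕ) : ChanEnv V → Sys V → Label V → Sys V → Prop where
  -- (Snd)
  | snd {Γ : ChanEnv V} {c : Chan} {e : Exp V} {v : V} {P : Proc V} :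
      e.eval = some v →
      Step errv δ Γ (.proc (.broadcast c e P)) (.out c v) (.proc (Proc.sigmaIter (δ v) P))
  -- (Rcv)
  | rcv {Γ : ChanEnv V} {c : Chan} {P Q : Proc V} {v : V} :
      (Γ c).1 = 0 →
      Step errv δ Γ (.proc (.rcv c P Q)) (.inp c v) (.active c P)
  -- (RcvIgn)
  | rcvIgn {Γ : ChanEnv V} {W : Sys V} {c : Chan} {v : V} :
      ¬ Isrcv Γ W c →
      Step errv δ Γ W (.inp c v) W
  -- (Sync) and its symmetric counterpart
  | sync {Γ : ChanEnv V} {W1 W2 W1' W2' : Sys V} {c : Chan} {v : V} :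
      Step errv δ Γ W1 (.out c v) W1' → Step errv δ Γ W2 (.inp c v) W2' →
      Step errv δ Γ (.par W1 W2) (.out c v) (.par W1' W2')
  | syncR {Γ : ChanEnv V} {W1 W2 W1' W2' : Sys V} {c : Chan} {v : V} :
      Step errv δ Γ W1 (.inp c v) W1' → Step errv δ Γ W2 (.out c v) W2' →
      Step errv δ Γ (.par W1 W2) (.out c v) (.par W1' W2')
  -- (RcvPar)
  | rcvPar {Γ : ChanEnv V} {W1 W2 W1' W2' : Sys V} {c : Chan} {v : V} :
      Step errv δ Γ W1 (.inp c v) W1' → Step errv δ Γ W2 (.inp c v) W2' →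
      Step errv δ Γ (.par W1 W2) (.inp c v) (.par W1' W2')
  -- (TimeNil)
  | timeNil {Γ : ChanEnv V} :
      Step errv δ Γ (.proc .nil) .sigma (.proc .nil)
  -- (Sleep)
  | sleep {Γ : ChanEnv V} {P : Proc V} :
      Step errv δ Γ (.proc (.sigma P)) .sigma (.proc P)
  -- (ActRcv)
  | actRcv {Γ : ChanEnv V} {c : Chan} {P : Proc V} :
      1 < (Γ c).1 →
      Step errv δ Γ (.active c P) .sigma (.active c P)
  -- (EndRcv)
  | endRcv {Γ : ChanEnv V} {c : Chan} {P : Proc V} {w : V} :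
      (Γ c).1 = 1 → (Γ c).2 = w →
      Step errv δ Γ (.active c P) .sigma (.proc (Proc.substD P 0 w))
  -- (Timeout)
  | timeout {Γ : ChanEnv V} {c : Chan} {P Q : Proc V} :
      (Γ c).1 = 0 →
      Step errv δ Γ (.proc (.rcv c P Q)) .sigma (.proc Q)
  -- (RcvLate)
  | rcvLate {Γ : ChanEnv V} {c : Chan} {P Q : Proc V} :
      0 < (Γ c).1 →
      Step errv δ Γ (.proc (.rcv c P Q)) .tau (.active c (Proc.liftD (Proc.substD P 0 errv) 0))
  -- (Tau)
  | tauStep {Γ : ChanEnv V} {P : Proc V} :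
      Step errv δ Γ (.proc (.tau P)) .tau (.proc P)
  -- (Then)
  | thenB {Γ : ChanEnv V} {b : BExp V} {P Q : Proc V} :
      BEval Γ b true →
      Step errv δ Γ (.proc (.mtch b P Q)) .tau (.proc (.sigma P))
  -- (Else)
  | elseB {Γ : ChanEnv V} {b : BExp V} {P Q : Proc V} :
      BEval Γ b false →
      Step errv δ Γ (.proc (.mtch b P Q)) .tau (.proc (.sigma Q))
  -- (TimePar)
  | timePar {Γ : ChanEnv V} {W1 W2 W1' W2' : Sys V} :
      Step errv δ Γ W1 .sigma W1' → Step errv δ Γ W2 .sigma W2' →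
      Step errv δ Γ (.par W1 W2) .sigma (.par W1' W2')
  -- (TauPar) and its symmetric counterpart
  | tauParL {Γ : ChanEnv V} {W1 W2 W1' : Sys V} :
      Step errv δ Γ W1 .tau W1' →
      Step errv δ Γ (.par W1 W2) .tau (.par W1' W2)
  | tauParR {Γ : ChanEnv V} {W1 W2 W2' : Sys V} :
      Step errv δ Γ W2 .tau W2' →
      Step errv δ Γ (.par W1 W2) .tau (.par W1 W2')
  -- (Rec)
  | recS {Γ : ChanEnv V} {P : Proc V} {lam : Label V} {W : Sys V} :
      Step errv δ Γ (.proc (Proc.substP P 0 (.fix P))) lam W →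
      Step errv δ Γ (.proc (.fix P)) lam W
  -- (Sum) and its symmetric counterpart
  | sumL {Γ : ChanEnv V} {P Q : Proc V} {lam : Label V} {W : Sys V} :
      Step errv δ Γ (.proc P) lam W → (lam = .tau ∨ ∃ c v, lam = .out c v) →
      Step errv δ Γ (.proc (.sum P Q)) lam W
  | sumR {Γ : ChanEnv V} {P Q : Proc V} {lam : Label V} {W : Sys V} :
      Step errv δ Γ (.proc Q) lam W → (lam = .tau ∨ ∃ c v, lam = .out c v) →
      Step errv δ Γ (.proc (.sum P Q)) lam W
  -- (SumTime)
  | sumTime {Γ : ChanEnv V} {P Q P' Q' : Proc V} :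
      Step errv δ Γ (.proc P) .sigma (.proc P') → Step errv δ Γ (.proc Q) .sigma (.proc Q') →
      Step errv δ Γ (.proc (.sum P Q)) .sigma (.proc (.sum P' Q'))
  -- (SumRcv) and its symmetric counterpart
  | sumRcvL {Γ : ChanEnv V} {P Q : Proc V} {c : Chan} {v : V} {W : Sys V} :
      Step errv δ Γ (.proc P) (.inp c v) W → Isrcv Γ (.proc P) c →
      Step errv δ Γ (.proc (.sum P Q)) (.inp c v) W
  | sumRcvR {Γ : ChanEnv V} {P Q : Proc V} {c : Chan} {v : V} {W : Sys V} :
      Step errv δ Γ (.proc Q) (.inp c v) W → Isrcv Γ (.proc Q) c →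
      Step errv δ Γ (.proc (.sum P Q)) (.inp c v) W
  -- (ResI)
  | resI {Γ : ChanEnv V} {c : Chan} {n : ℕ} {v w : V} {W W' : Sys V} :
      Step errv δ (updEnv Γ c (n, v)) W (.out c w) W' →
      Step errv δ Γ (.res c n v W) .tau
        (.res c (updBcast errv δ (updEnv Γ c (n, v)) c w c).1
                (updBcast errv δ (updEnv Γ c (n, v)) c w c).2 W')
  -- (ResV)
  | resV {Γ : ChanEnv V} {c : Chan} {n : ℕ} {v : V} {W W' : Sys V} {lam : Label V} :
      Step errv δ (updEnv Γ c (n, v)) W lam W' →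
      ¬ lam.usesChan c → lam ≠ .sigma →
      Step errv δ Γ (.res c n v W) lam (.res c n v W')
  -- time passage under restriction
  | resT {Γ : ChanEnv V} {c : Chan} {n : ℕ} {v : V} {W W' : Sys V} :
      Step errv δ (updEnv Γ c (n, v)) W .sigma W' →
      Step errv δ Γ (.res c n v W) .sigma (.res c (n - 1) v W')

/-- Configurations. -/
abbrev Config (V : Type) : Type := ChanEnv V × Sys V

/-- Instantaneous reductions (broadcast or internal step). -/
def RedI (errv : V) (δ : V → ℕ) (C C' : Config V) : Prop :=
  (Step errv δ C.1 C.2 .tau C'.2 ∧ C'.1 = C.1) ∨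
  (∃ c v, Step errv δ C.1 C.2 (.out c v) C'.2 ∧ C'.1 = updBcast errv δ C.1 c v)

/-- Timed reductions. -/
def RedT (errv : V) (δ : V → ℕ) (C C' : Config V) : Prop :=
  Step errv δ C.1 C.2 .sigma C'.2 ∧ C'.1 = updL errv δ .sigma C.1

/-- Reductions of configurations. -/
def Red (errv : V) (δ : V → ℕ) (C C' : Config V) : Prop :=
  RedI errv δ C C' ∨ RedT errv δ C C'

def RedStar (errv : V) (δ : V → ℕ) : Config V → Config V → Prop :=
  Relation.ReflTransGen (Red errv δ)

def RedIStar (errv : V) (δ : V → ℕ) : Config V → Config V → Prop :=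
  Relation.ReflTransGen (RedI errv δ)

/-- Iteration of a relation a fixed number of times. -/
def relPow {α : Type _} (r : α → α → Prop) : ℕ → α → α → Prop
  | 0 => Eq
  | n + 1 => fun a c => ∃ b, r a b ∧ relPow r n b c

/-- Strong barb: channel c is exposed. -/
def Barb (C : Config V) (c : Chan) : Prop := 0 < (C.1 c).1

/-- Weak barb. -/
def WBarb (errv : V) (δ : V → ℕ) (C : Config V) (c : Chan) : Prop :=
  ∃ C', RedStar errv δ C C' ∧ Barb C' c

/-- Extensional actions. -/
inductive Act (V : Type) : Type where
  | inp (c : Chan) (v : V)     -- c?v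
  | time                       -- σ
  | tauA                       -- τ
  | deliver (c : Chan) (v : V) -- γ(c,v)
  | idle (c : Chan)            -- ι(c)

/-- The extensional LTS over configurations. -/
inductive EStep (errv : V) (δ : V → ℕ) : Config V → Act V → Config V → Prop where
  | einp {Γ : ChanEnv V} {W W' : Sys V} {c : Chan} {v : V} :
      Step errv δ Γ W (.inp c v) W' →
      EStep errv δ (Γ, W) (.inp c v) (updBcast errv δ Γ c v, W')
  | etime {Γ : ChanEnv V} {W W' : Sys V} :
      Step errv δ Γ W .sigma W' →
      EStep errv δ (Γ, W) .time (updL errv δ .sigma Γ, W')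
  | eshh {Γ : ChanEnv V} {W W' : Sys V} {c : Chan} {v : V} :
      Step errv δ Γ W (.out c v) W' →
      EStep errv δ (Γ, W) .tauA (updBcast errv δ Γ c v, W')
  | etau {Γ : ChanEnv V} {W W' : Sys V} :
      Step errv δ Γ W .tau W' →
      EStep errv δ (Γ, W) .tauA (Γ, W')
  | edeliver {Γ : ChanEnv V} {W W' : Sys V} {c : Chan} {v : V} :
      Γ c = (1, v) → Step errv δ Γ W .sigma W' →
      EStep errv δ (Γ, W) (.deliver c v) (updL errv δ .sigma Γ, W')
  | eidle {Γ : ChanEnv V} {W : Sys V} {c : Chan} :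
      (Γ c).1 = 0 →
      EStep errv δ (Γ, W) (.idle c) (Γ, W)

/-- Weak internal moves ⟹. -/
def TauStar (errv : V) (δ : V → ℕ) : Config V → Config V → Prop :=
  Relation.ReflTransGen (fun C C' => EStep errv δ C .tauA C')

/-- Weak extensional action C ⟹α⟹ C'. -/
def WStep (errv : V) (δ : V → ℕ) (C : Config V) (α : Act V) (C' : Config V) : Prop :=
  ∃ C1 C2, TauStar errv δ C C1 ∧ EStep errv δ C1 α C2 ∧ TauStar errv δ C2 C'

/-- C ⟹α̂⟹ C'. -/
def WHat (errv : V) (δ : V → ℕ) (C : Config V) (α : Act V) (C' : Config V) : Prop :=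
  match α with
  | .tauA => TauStar errv δ C C'
  | _ => WStep errv δ C α C'

/-- (Weak) bisimulations on the extensional LTS. -/
def IsBisim (errv : V) (δ : V → ℕ) (R : Config V → Config V → Prop) : Prop :=
  Symmetric R ∧
  ∀ C1 C2, R C1 C2 → ∀ (α : Act V) C1', EStep errv δ C1 α C1' →
    ∃ C2', WHat errv δ C2 α C2' ∧ R C1' C2'

/-- Weak bisimilarity ≈. -/
def Bisim (errv : V) (δ : V → ℕ) (C1 C2 : Config V) : Prop :=
  ∃ R, IsBisim errv δ R ∧ R C1 C2

/-- Barb-preserving relations. -/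
def BarbPreserving (errv : V) (δ : V → ℕ) (R : Config V → Config V → Prop) : Prop :=
  ∀ C1 C2, R C1 C2 → ∀ c, WBarb errv δ C1 c → WBarb errv δ C2 c

/-- Reduction-closed relations. -/
def ReductionClosed (errv : V) (δ : V → ℕ) (R : Config V → Config V → Prop) : Prop :=
  ∀ C1 C2, R C1 C2 → ∀ C1', Red errv δ C1 C1' →
    ∃ C2', RedStar errv δ C2 C2' ∧ R C1' C2'

/-- Contextual relations. -/
def Contextual (R : Config V → Config V → Prop) : Prop :=
  ∀ Γ1 W1 Γ2 W2, R (Γ1, W1) (Γ2, W2) →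
    ∀ W : Sys V, W.proper → R (Γ1, .par W1 W) (Γ2, .par W2 W)

/-- Reduction barbed congruence ≃: the largest symmetric, barb-preserving,
reduction-closed and contextual relation. -/
def RBC (errv : V) (δ : V → ℕ) (C1 C2 : Config V) : Prop :=
  ∃ R, Symmetric R ∧ BarbPreserving errv δ R ∧ ReductionClosed errv δ R ∧
    Contextual R ∧ R C1 C2

/-- Well-formed configurations. -/
inductive WF : ChanEnv V → Sys V → Prop where
  | wfProc {Γ : ChanEnv V} (P : Proc V) : WF Γ (.proc P)
  | wfActive {Γ : ChanEnv V} {c : Chan} (P : Proc V) : 0 < (Γ c).1 → WF Γ (.active c P)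
  | wfPar {Γ : ChanEnv V} {W1 W2 : Sys V} : WF Γ W1 → WF Γ W2 → WF Γ (.par W1 W2)
  | wfRes {Γ : ChanEnv V} {c : Chan} {n : ℕ} {v : V} {W : Sys V} :
      WF (updEnv Γ c (n, v)) W → WF Γ (.res c n v W)

/-- Comparison of channel environments: Γ ≤ Γ'. -/
def EnvLE (Γ Γ' : ChanEnv V) : Prop := ∀ c : Chan, (Γ c).1 ≤ (Γ' c).1

lemma envle_updBcast {V : Type} (errv : V) (δ : V → ℕ) (hδ : ∀ v : V, 1 ≤ δ v)
    (Γ : ChanEnv V) (c : Chan) (v : V) : EnvLE Γ (updBcast errv δ Γ c v) := by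
  intro d
  unfold updBcast
  by_cases hd : d = c
  · subst hd
    simp only [if_pos rfl]
    by_cases h0 : (Γ d).1 = 0
    · simp [h0]
    · simp [h0, le_max_right]
  · simp [hd]

lemma wf_mono {V : Type} {Γ Γ' : ChanEnv V} {W : Sys V}
    (hwf : WF Γ W) (hle : EnvLE Γ Γ') : WF Γ' W := by
  induction hwf generalizing Γ' with
  | wfProc P => exact WF.wfProc P
  | wfActive P h => exact WF.wfActive P (lt_of_lt_of_le h (hle _))
  | wfPar _ _ ih1 ih2 => exact WF.wfPar (ih1 hle) (ih2 hle)
  | @wfRes _ c n v _ _ ih =>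
      refine WF.wfRes (ih ?_)
      intro d
      unfold updEnv
      by_cases hd : d = c
      · simp [hd]
      · simp [hd]; exact hle d

lemma updBcast_updEnv_comm {V : Type} (errv : V) (δ : V → ℕ) (Γ : ChanEnv V)
    (c d : Chan) (p : ℕ × V) (w : V) (hdc : d ≠ c) :
    updBcast errv δ (updEnv Γ c p) d w = updEnv (updBcast errv δ Γ d w) c p := by
  funext e
  unfold updBcast updEnv
  by_cases he : e = d
  · subst he
    simp [hdc, Ne.symm hdc]
  · by_cases hec : e = c <;> simp [he, hec, Ne.symm hdc, hdc]

lemma step_wf {V : Type} (errv : V) (δ : V → ℕ) (hδ : ∀ v : V, 1 ≤ δ v)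
    {Γ : ChanEnv V} {W : Sys V} {lam : Label V} {W' : Sys V}
    (h : Step errv δ Γ W lam W') (hwf : WF Γ W) :
    WF (updL errv δ lam Γ) W' := by
  induction h with
  | snd _ => exact WF.wfProc _
  | @rcv Γ c P Q v h0 =>
      refine WF.wfActive _ ?_
      simp only [updL, updBcast, if_pos rfl, h0]
      exact hδ v
  | rcvIgn _ => exact wf_mono hwf (envle_updBcast errv δ hδ _ _ _)
  | sync _ _ ih1 ih2 =>
      cases hwf with
      | wfPar hw1 hw2 => exact WF.wfPar (ih1 hw1) (ih2 hw2)
  | syncR _ _ ih1 ih2 =>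
      cases hwf with
      | wfPar hw1 hw2 => exact WF.wfPar (ih1 hw1) (ih2 hw2)
  | rcvPar _ _ ih1 ih2 =>
      cases hwf with
      | wfPar hw1 hw2 => exact WF.wfPar (ih1 hw1) (ih2 hw2)
  | timeNil => exact WF.wfProc _
  | sleep => exact WF.wfProc _
  | @actRcv Γ c P h1 =>
      refine WF.wfActive _ ?_
      simp only [updL]
      omega
  | endRcv _ _ => exact WF.wfProc _
  | timeout _ => exact WF.wfProc _
  | rcvLate h0 => exact WF.wfActive _ h0
  | tauStep => exact WF.wfProc _
  | thenB _ => exact WF.wfProc _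
  | elseB _ => exact WF.wfProc _
  | timePar _ _ ih1 ih2 =>
      cases hwf with
      | wfPar hw1 hw2 => exact WF.wfPar (ih1 hw1) (ih2 hw2)
  | tauParL _ ih =>
      cases hwf with
      | wfPar hw1 hw2 => exact WF.wfPar (ih hw1) hw2
  | tauParR _ ih =>
      cases hwf with
      | wfPar hw1 hw2 => exact WF.wfPar hw1 (ih hw2)
  | recS _ ih => exact ih (WF.wfProc _)
  | sumL _ _ ih => exact ih (WF.wfProc _)
  | sumR _ _ ih => exact ih (WF.wfProc _)
  | sumTime _ _ _ _ => exact WF.wfProc _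
  | sumRcvL _ _ ih => exact ih (WF.wfProc _)
  | sumRcvR _ _ ih => exact ih (WF.wfProc _)
  | @resI Γ c n v w W W' _ ih =>
      cases hwf with
      | wfRes hw =>
        have hwf' := ih hw
        refine WF.wfRes ?_
        have heq : updEnv (updL errv δ Label.tau Γ) c
            ((updBcast errv δ (updEnv Γ c (n, v)) c w c).1,
             (updBcast errv δ (updEnv Γ c (n, v)) c w c).2)
            = updBcast errv δ (updEnv Γ c (n, v)) c w := by
          funext e
          unfold updEnv updL updBcast
          by_cases he : e = c <;> simp [he]
        rw [heq]
        simpa only [updL] using hwf'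
  | @resV Γ c n v W W' lam _ hnc hns ih =>
      cases hwf with
      | wfRes hw =>
        have hwf' := ih hw
        refine WF.wfRes ?_
        have heq : updEnv (updL errv δ lam Γ) c (n, v)
            = updL errv δ lam (updEnv Γ c (n, v)) := by
          cases lam with
          | out d u =>
              simp only [updL]
              exact (updBcast_updEnv_comm errv δ Γ c d (n, v) u hnc).symm
          | inp d u =>
              simp only [updL]
              exact (updBcast_updEnv_comm errv δ Γ c d (n, v) u hnc).symm
          | tau => rfl
          | sigma => exact absurd rfl hns
        rw [heq]
        exact hwf'
  | @resT Γ c n v W W' _ ih =>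
      cases hwf with
      | wfRes hw =>
        have hwf' := ih hw
        refine WF.wfRes ?_
        have heq : updEnv (updL errv δ Label.sigma Γ) c (n - 1, v)
            = updL errv δ Label.sigma (updEnv Γ c (n, v)) := by
          funext e
          unfold updEnv updL
          by_cases he : e = c <;> simp [he]
        rw [heq]
        exact hwf'

/-- Well-formedness is preserved by reduction (Lemma 4.8 of the paper). -/
theorem wf_preserved_by_reduction {V : Type} (errv : V) (δ : V → ℕ) (hδ : ∀ v : V, 1 ≤ δ v)
    (C C' : Config V) (hp : C.2.proper) (hwf : WF C.1 C.2)
    (h : Red errv δ C C') :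
    WF C'.1 C'.2 := by
  rcases h with (⟨hs, he⟩ | ⟨c, v, hs, he⟩) | ⟨hs, he⟩
  · rw [he]; exact step_wf errv δ hδ hs hwf
  · rw [he]
    exact step_wf errv δ hδ (lam := .out c v) hs hwf
  · rw [he]
    exact step_wf errv δ hδ (lam := .sigma) hs hwf

end CCCP
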